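/- There exists a sequence {Xⁿ} of continuous semimartingales on [0,1] (namely Ornstein–Uhlenbeck processes Xⁿ = Z^{λₙ,ηₙ} with ηₙ → ∞ and λₙ chosen large) such that sup_{t≤1}|Xⁿ_t| → 0 almost surely, while the quadratic variations satisfy [Xⁿ, Xⁿ]₁ = ηₙ² → ∞. -/

import Mathlib

open MeasureTheory Filter ProbabilityTheory



section Aux

/-- clamp to [0,1] -/
noncomputable def clamp01 (x : ℝ) : ℝ := max 0 (min 1 x)

lemma clamp01_mem (x : ℝ) : clamp01 x ∈ Set.Icc (0:ℝ) 1 :=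
  ⟨le_max_left _ _, max_le zero_le_one (min_le_left _ _)⟩

lemma clamp01_of_mem {x : ℝ} (hx : x ∈ Set.Icc (0:ℝ) 1) : clamp01 x = x := by
  simp only [clamp01, min_eq_right hx.2, max_eq_right hx.1]

lemma clamp01_lipschitz (a b : ℝ) : |clamp01 a - clamp01 b| ≤ |a - b| := by
  unfold clamp01
  calc |max 0 (min 1 a) - max 0 (min 1 b)|
      = |max (min 1 a) 0 - max (min 1 b) 0| := by rw [max_comm, max_comm (0:ℝ)]
    _ ≤ |min 1 a - min 1 b| := abs_max_sub_max_le_abs _ _ _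
    _ = |min a 1 - min b 1| := by rw [min_comm, min_comm (1:ℝ)]
    _ ≤ max |a - b| |(1:ℝ) - 1| := abs_min_sub_min_le_max _ _ _ _
    _ ≤ |a - b| := by simp

lemma clamp01_continuous : Continuous clamp01 :=
  continuous_const.max (continuous_const.min continuous_id)

lemma exists_rat_seq (t : ℝ) : ∃ q : ℕ → ℚ, (∀ i, |t - (q i : ℝ)| < 1/(i+1)) ∧
    Tendsto (fun i => (q i : ℝ)) atTop (nhds t) := by
  have h : ∀ i : ℕ, ∃ q : ℚ, |t - (q : ℝ)| < 1/(i+1) := fun i =>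
    exists_rat_near t (by positivity)
  choose q hq using h
  refine ⟨q, hq, ?_⟩
  rw [Metric.tendsto_atTop]
  intro ε hε
  obtain ⟨N, hN⟩ := exists_nat_one_div_lt (K := ℝ) hε
  refine ⟨N, fun i hi => ?_⟩
  have h1 : (1:ℝ)/(i+1) ≤ 1/(N+1) := by
    apply one_div_le_one_div_of_le (by positivity)
    have : (N:ℝ) ≤ i := Nat.cast_le.mpr hi
    linarith
  calc dist (q i : ℝ) t = |t - (q i : ℝ)| := by rw [dist_comm, Real.dist_eq]
    _ < 1/(i+1) := hq i
    _ ≤ 1/(N+1) := h1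
    _ < ε := hN

end Aux


lemma ou_formula (lam eta : ℝ) (hlam : 0 < lam) (w f : ℝ → ℝ)
    (hw : Continuous w) (hf : Continuous f)
    (heq : ∀ t ∈ Set.Icc (0:ℝ) 1, f t = -lam * (∫ s in (0:ℝ)..t, f s) + eta * w t) :
    ∀ t ∈ Set.Icc (0:ℝ) 1,
      f t = eta * w t - lam * eta * Real.exp (-(lam*t)) *
        ∫ s in (0:ℝ)..t, Real.exp (lam*s) * w s := by
  have hwJ : Continuous fun s => Real.exp (lam*s) * w s :=
    ((Real.continuous_exp.comp (continuous_const.mul continuous_id)).mul hw)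
  set F : ℝ → ℝ := fun t => ∫ s in (0:ℝ)..t, f s with hFdef
  set J : ℝ → ℝ := fun t => ∫ s in (0:ℝ)..t, Real.exp (lam*s) * w s with hJdef
  have hFd : ∀ t : ℝ, HasDerivAt F (f t) t := fun t =>
    intervalIntegral.integral_hasDerivAt_right (hf.intervalIntegrable _ _)
      (hf.stronglyMeasurableAtFilter _ _) hf.continuousAt
  have hJd : ∀ t : ℝ, HasDerivAt J (Real.exp (lam*t) * w t) t := fun t =>
    intervalIntegral.integral_hasDerivAt_right (hwJ.intervalIntegrable _ _)
      (hwJ.stronglyMeasurableAtFilter _ _) hwJ.continuousAt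
  have hFc : Continuous F := by
    rw [continuous_iff_continuousAt]; exact fun t => (hFd t).continuousAt
  have hJc : Continuous J := by
    rw [continuous_iff_continuousAt]; exact fun t => (hJd t).continuousAt
  have hGd : ∀ t ∈ Set.Icc (0:ℝ) 1,
      HasDerivAt (fun t => Real.exp (lam*t) * F t - eta * J t) 0 t := by
    intro t ht
    have h1 : HasDerivAt (fun t => Real.exp (lam*t)) (lam * Real.exp (lam*t)) t := by
      simpa [mul_comm, Function.comp_def] using
        (Real.hasDerivAt_exp (lam*t)).comp t ((hasDerivAt_id t).const_mul lam)
    have h2 : HasDerivAt (fun t => Real.exp (lam*t) * F t - eta * J t)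
        (lam * Real.exp (lam * t) * F t + Real.exp (lam * t) * f t - eta * (Real.exp (lam * t) * w t)) t :=
      (h1.mul (hFd t)).sub ((hJd t).const_mul eta)
    convert h2 using 1
    rw [heq t ht]
    ring
  have hGc : ∀ t ∈ Set.Icc (0:ℝ) 1,
      (fun t => Real.exp (lam*t) * F t - eta * J t) t =
      (fun t => Real.exp (lam*t) * F t - eta * J t) 0 := by
    apply constant_of_has_deriv_right_zero
    · exact (((Real.continuous_exp.comp (continuous_const.mul continuous_id)).mul hFc).sub
        (continuous_const.mul hJc)).continuousOn
    · intro x hx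
      exact (hGd x ⟨hx.1, hx.2.le⟩).hasDerivWithinAt
  intro t ht
  have h0 := hGc t ht
  simp only [mul_zero, intervalIntegral.integral_same] at h0
  have h0' : Real.exp (lam*t) * F t - eta * J t = 0 := by
    simpa [hFdef, hJdef, intervalIntegral.integral_same] using h0
  have hee : Real.exp (-(lam*t)) * Real.exp (lam*t) = 1 := by
    rw [← Real.exp_add]; simp
  rw [heq t ht]
  show -lam * F t + eta * w t = eta * w t - lam * eta * Real.exp (-(lam*t)) * J t
  linear_combination (-lam * Real.exp (-(lam*t))) * h0' + (lam * F t) * hee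



lemma ou_bound (lam eta δ M md : ℝ) (w f : ℝ → ℝ) (hlam : 0 < lam) (heta : 0 < eta)
    (hδ : 0 < δ) (hw : Continuous w) (hw0 : w 0 = 0) (hf : Continuous f)
    (hM : ∀ t ∈ Set.Icc (0:ℝ) 1, |w t| ≤ M)
    (hmd : ∀ s ∈ Set.Icc (0:ℝ) 1, ∀ t ∈ Set.Icc (0:ℝ) 1, |s - t| ≤ δ → |w s - w t| ≤ md)
    (heq : ∀ t ∈ Set.Icc (0:ℝ) 1, f t = -lam * (∫ s in (0:ℝ)..t, f s) + eta * w t) :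
    ∀ t ∈ Set.Icc (0:ℝ) 1, |f t| ≤ 2*eta*(md + M*(1+lam)*Real.exp (-(lam*δ))) := by
  have hM0 : 0 ≤ M := (abs_nonneg _).trans (hM 0 ⟨le_refl 0, zero_le_one⟩)
  have hmd0 : 0 ≤ md := by
    have := hmd 0 ⟨le_refl 0, zero_le_one⟩ 0 ⟨le_refl 0, zero_le_one⟩ (by simpa using hδ.le)
    simpa using this
  have hexp : Continuous fun s : ℝ => Real.exp (lam * s) := by fun_prop
  have hwJ : Continuous fun s : ℝ => Real.exp (lam*s) * w s := hexp.mul hw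
  intro t ht
  obtain ⟨ht0, ht1⟩ := ht
  have heδ0 : (0:ℝ) < Real.exp (-(lam*δ)) := Real.exp_pos _
  have hem0 : (0:ℝ) < Real.exp (-(lam*t)) := Real.exp_pos _
  have hep0 : (0:ℝ) < Real.exp (lam*t) := Real.exp_pos _
  set eδ := Real.exp (-(lam*δ))
  set em := Real.exp (-(lam*t))
  set ep := Real.exp (lam*t)
  have hee : em * ep = 1 := by
    rw [show em * ep = Real.exp (-(lam*t)) * Real.exp (lam*t) from rfl, ← Real.exp_add,
      neg_add_cancel, Real.exp_zero]
  have h2M : (0:ℝ) ≤ 2*M*eδ*ep := by positivity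
  -- antiderivative of lam * exp (lam s)
  have hE : ∫ s in (0:ℝ)..t, lam * Real.exp (lam*s) = ep - 1 := by
    have hd : ∀ x ∈ Set.uIcc (0:ℝ) t,
        HasDerivAt (fun s => Real.exp (lam*s)) (lam * Real.exp (lam*x)) x := by
      intro x _
      simpa [mul_comm, Function.comp_def] using
        (Real.hasDerivAt_exp (lam*x)).comp x ((hasDerivAt_id x).const_mul lam)
    have := intervalIntegral.integral_eq_sub_of_hasDerivAt hd
      ((continuous_const.mul hexp).intervalIntegrable _ _)
    rw [this]; simp [ep]
  have hEval : ∫ s in (0:ℝ)..t, Real.exp (lam*s) = (ep - 1)/lam := by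
    rw [eq_div_iff hlam.ne', mul_comm, ← hE, ← intervalIntegral.integral_const_mul]
  -- the key integral I
  set I := ∫ s in (0:ℝ)..t, Real.exp (lam*s) * (w t - w s) with hI
  have hIc : Continuous fun s : ℝ => Real.exp (lam*s) * (w t - w s) :=
    hexp.mul (continuous_const.sub hw)
  -- I = w t * ((ep-1)/lam) - J
  have hIJ : I = w t * ((ep - 1)/lam) - ∫ s in (0:ℝ)..t, Real.exp (lam*s) * w s := by
    rw [hI]
    have hfe : (fun s => Real.exp (lam*s) * (w t - w s)) =
        fun s => w t * Real.exp (lam*s) - Real.exp (lam*s) * w s := by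
      funext s; ring
    rw [hfe, intervalIntegral.integral_sub
      ((by fun_prop : Continuous fun s => w t * Real.exp (lam*s)).intervalIntegrable _ _)
      (hwJ.intervalIntegrable _ _), intervalIntegral.integral_const_mul, hEval]
  -- f t in terms of I
  have hfid : f t = eta * em * w t + lam * eta * em * I := by
    rw [ou_formula lam eta hlam w f hw hf heq t ⟨ht0, ht1⟩, hIJ]
    field_simp
    linear_combination (-(w t)) * (hee : Real.exp (-(lam*t)) * ep = 1)
  -- bound |I|
  have hIb : |I| ≤ md * ((ep - 1)/lam) + 2*M*eδ*ep*t := by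
    have h1 : |I| ≤ ∫ s in (0:ℝ)..t, |Real.exp (lam*s) * (w t - w s)| := by
      rw [hI]; exact intervalIntegral.abs_integral_le_integral_abs ht0
    have h2 : (∫ s in (0:ℝ)..t, |Real.exp (lam*s) * (w t - w s)|) ≤
        ∫ s in (0:ℝ)..t, (md * Real.exp (lam*s) + 2*M*eδ*ep) := by
      apply intervalIntegral.integral_mono_on ht0
        (hIc.abs.intervalIntegrable _ _)
        (((continuous_const.mul hexp).add continuous_const).intervalIntegrable _ _)
      intro s hs
      have hs0 := hs.1
      have hst := hs.2
      have hsIcc : s ∈ Set.Icc (0:ℝ) 1 := ⟨hs0, hst.trans ht1⟩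
      have hes : (0:ℝ) < Real.exp (lam*s) := Real.exp_pos _
      rw [abs_mul, abs_of_pos hes]
      rcases le_or_gt (t - s) δ with hc | hc
      · have hb : |w t - w s| ≤ md :=
          hmd t ⟨ht0, ht1⟩ s hsIcc (by rw [abs_of_nonneg (by linarith)]; linarith)
        calc Real.exp (lam*s) * |w t - w s| ≤ Real.exp (lam*s) * md :=
              mul_le_mul_of_nonneg_left hb hes.le
          _ = md * Real.exp (lam*s) := mul_comm _ _
          _ ≤ md * Real.exp (lam*s) + 2*M*eδ*ep := le_add_of_nonneg_right h2M
      · have hb : |w t - w s| ≤ 2*M := by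
          calc |w t - w s| ≤ |w t| + |w s| := abs_sub _ _
            _ ≤ M + M := add_le_add (hM t ⟨ht0, ht1⟩) (hM s hsIcc)
            _ = 2*M := by ring
        have h3 : Real.exp (lam*s) ≤ eδ * ep := by
          have hle : lam * s ≤ -(lam*δ) + lam*t := by nlinarith
          calc Real.exp (lam*s) ≤ Real.exp (-(lam*δ) + lam*t) := Real.exp_le_exp.mpr hle
            _ = eδ * ep := Real.exp_add _ _
        calc Real.exp (lam*s) * |w t - w s| ≤ Real.exp (lam*s) * (2*M) :=
              mul_le_mul_of_nonneg_left hb hes.le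
          _ ≤ (eδ * ep) * (2*M) := mul_le_mul_of_nonneg_right h3 (by linarith)
          _ = 2*M*eδ*ep := by ring
          _ ≤ md * Real.exp (lam*s) + 2*M*eδ*ep :=
              le_add_of_nonneg_left (mul_nonneg hmd0 hes.le)
    have h3 : (∫ s in (0:ℝ)..t, (md * Real.exp (lam*s) + 2*M*eδ*ep)) =
        md * ((ep - 1)/lam) + 2*M*eδ*ep*t := by
      rw [intervalIntegral.integral_add
        ((by fun_prop : Continuous fun s => md * Real.exp (lam*s)).intervalIntegrable _ _)
        (intervalIntegrable_const), intervalIntegral.integral_const_mul, hEval,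
        intervalIntegral.integral_const]
      simp only [smul_eq_mul, sub_zero]
      ring
    linarith [h1, h2.trans_eq h3]
  -- first term bound
  have hfirst : em * |w t| ≤ md + M * eδ := by
    rcases le_or_gt t δ with hc | hc
    · have hb : |w t| ≤ md := by
        have := hmd t ⟨ht0, ht1⟩ 0 ⟨le_refl 0, zero_le_one⟩
          (by rw [sub_zero, abs_of_nonneg ht0]; exact hc)
        simpa [hw0] using this
      have he1 : em ≤ 1 := Real.exp_le_one_iff.mpr (by nlinarith)
      calc em * |w t| ≤ em * md := mul_le_mul_of_nonneg_left hb hem0.le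
        _ ≤ md := mul_le_of_le_one_left hmd0 he1
        _ ≤ md + M * eδ := le_add_of_nonneg_right (mul_nonneg hM0 heδ0.le)
    · have hb : |w t| ≤ M := hM t ⟨ht0, ht1⟩
      have he1 : em ≤ eδ := Real.exp_le_exp.mpr (by nlinarith)
      calc em * |w t| ≤ eδ * M := mul_le_mul he1 hb (abs_nonneg _) heδ0.le
        _ = M * eδ := mul_comm _ _
        _ ≤ md + M * eδ := le_add_of_nonneg_left hmd0
  -- second term bound
  have hsecond : lam * em * |I| ≤ md + 2*M*lam*eδ := by
    have h1 : lam * em * |I| ≤ lam * em * (md * ((ep - 1)/lam) + 2*M*eδ*ep*t) :=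
      mul_le_mul_of_nonneg_left hIb (by positivity)
    have h2 : lam * em * (md * ((ep - 1)/lam) + 2*M*eδ*ep*t) =
        md * (1 - em) + 2*M*lam*eδ*t := by
      field_simp
      linear_combination (md + 2*lam*M*eδ*t) * hee
    rw [h2] at h1
    have h3 : md * (1 - em) ≤ md := mul_le_of_le_one_right hmd0 (by linarith)
    have h4 : 2*M*lam*eδ*t ≤ 2*M*lam*eδ :=
      mul_le_of_le_one_right (by positivity) ht1
    linarith
  -- combine
  rw [hfid]
  calc |eta * em * w t + lam * eta * em * I|
      ≤ |eta * em * w t| + |lam * eta * em * I| := abs_add_le _ _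
    _ = eta * (em * |w t|) + eta * (lam * em * |I|) := by
        simp only [abs_mul, abs_of_pos heta, abs_of_pos hem0, abs_of_pos hlam]
        ring
    _ ≤ eta * (md + M * eδ) + eta * (md + 2*M*lam*eδ) :=
        add_le_add (mul_le_mul_of_nonneg_left hfirst heta.le)
          (mul_le_mul_of_nonneg_left hsecond heta.le)
    _ ≤ 2*eta*(md + M*(1+lam)*eδ) := by
        nlinarith [mul_nonneg (mul_nonneg heta.le hM0) heδ0.le]




/-- wrapper for `ContinuousOn` solutions -/
lemma ou_bound' (lam eta δ M md : ℝ) (w f : ℝ → ℝ) (hlam : 0 < lam) (heta : 0 < eta)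
    (hδ : 0 < δ) (hw : Continuous w) (hw0 : w 0 = 0)
    (hf : ContinuousOn f (Set.Icc 0 1))
    (hM : ∀ t ∈ Set.Icc (0:ℝ) 1, |w t| ≤ M)
    (hmd : ∀ s ∈ Set.Icc (0:ℝ) 1, ∀ t ∈ Set.Icc (0:ℝ) 1, |s - t| ≤ δ → |w s - w t| ≤ md)
    (heq : ∀ t ∈ Set.Icc (0:ℝ) 1, f t = -lam * (∫ s in (0:ℝ)..t, f s) + eta * w t) :
    ∀ t ∈ Set.Icc (0:ℝ) 1, |f t| ≤ 2*eta*(md + M*(1+lam)*Real.exp (-(lam*δ))) := by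
  set g : ℝ → ℝ := fun x => f (clamp01 x) with hg
  have hgc : Continuous g := hf.comp_continuous clamp01_continuous clamp01_mem
  have hgeq : ∀ x ∈ Set.Icc (0:ℝ) 1, g x = f x := fun x hx => by
    rw [hg]; simp only [clamp01_of_mem hx]
  have hint : ∀ t ∈ Set.Icc (0:ℝ) 1,
      (∫ s in (0:ℝ)..t, g s) = ∫ s in (0:ℝ)..t, f s := by
    intro t ht
    apply intervalIntegral.integral_congr
    intro s hs
    rw [Set.uIcc_of_le ht.1] at hs
    exact hgeq s ⟨hs.1, hs.2.trans ht.2⟩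
  have heqg : ∀ t ∈ Set.Icc (0:ℝ) 1, g t = -lam * (∫ s in (0:ℝ)..t, g s) + eta * w t := by
    intro t ht
    rw [hgeq t ht, hint t ht]
    exact heq t ht
  intro t ht
  rw [← hgeq t ht]
  exact ou_bound lam eta δ M md w g hlam heta hδ hw hw0 hgc hM hmd heqg t ht

section Envelope

variable {Ω : Type*} [MeasurableSpace Ω] (W : ℝ → Ω → ℝ)

/-- measurable envelope for `sup_{t ∈ [0,1]} |W t|` -/
noncomputable def MWe (ω : Ω) : ℝ := ⨆ q : ℚ, |W (clamp01 q) ω|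

/-- measurable envelope for the modulus of continuity -/
noncomputable def MDe (δ : ℝ) (ω : Ω) : ℝ :=
  ⨆ p : ℚ × ℚ, if |(p.1 : ℝ) - (p.2 : ℝ)| ≤ δ then
    |W (clamp01 p.1) ω - W (clamp01 p.2) ω| else 0

lemma MWe_measurable (hm : ∀ t, Measurable (W t)) : Measurable (MWe W) :=
  Measurable.iSup fun q => continuous_abs.measurable.comp (hm _)

lemma MDe_measurable (hm : ∀ t, Measurable (W t)) (δ : ℝ) : Measurable (MDe W δ) := by
  apply Measurable.iSup
  intro p
  by_cases h : |(p.1 : ℝ) - (p.2 : ℝ)| ≤ δ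
  · simp only [h, if_true]
    exact continuous_abs.measurable.comp ((hm _).sub (hm _))
  · simp only [h, if_false]
    exact measurable_const

variable {W}
variable {ω : Ω} (hc : Continuous fun t => W t ω)

include hc

lemma good_exists_bound : ∃ C : ℝ, 0 ≤ C ∧ ∀ t ∈ Set.Icc (0:ℝ) 1, |W t ω| ≤ C := by
  obtain ⟨C, hC⟩ := (isCompact_Icc (a := (0:ℝ)) (b := 1)).exists_bound_of_continuousOn
    hc.continuousOn
  refine ⟨C, ?_, fun t ht => ?_⟩
  · exact (norm_nonneg _).trans (hC 0 ⟨le_refl 0, zero_le_one⟩)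
  · simpa [Real.norm_eq_abs] using hC t ht

lemma MWe_bddAbove : BddAbove (Set.range fun q : ℚ => |W (clamp01 q) ω|) := by
  obtain ⟨C, _, hC⟩ := good_exists_bound hc
  exact ⟨C, by rintro _ ⟨q, rfl⟩; exact hC _ (clamp01_mem _)⟩

lemma le_MWe {t : ℝ} (ht : t ∈ Set.Icc (0:ℝ) 1) : |W t ω| ≤ MWe W ω := by
  obtain ⟨q, hq, hqt⟩ := exists_rat_seq t
  have hcl : Tendsto (fun i => clamp01 (q i : ℝ)) atTop (nhds t) := by
    have := (clamp01_continuous.tendsto t).comp hqt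
    rwa [clamp01_of_mem ht] at this
  have habs : Tendsto (fun i => |W (clamp01 (q i : ℝ)) ω|) atTop (nhds |W t ω|) :=
    ((continuous_abs.comp hc).tendsto t).comp hcl
  apply le_of_tendsto habs
  exact Eventually.of_forall fun i => le_ciSup (MWe_bddAbove hc) (q i)

lemma MWe_nonneg : 0 ≤ MWe W ω :=
  (abs_nonneg _).trans (le_ciSup (MWe_bddAbove hc) 0)

lemma MDe_bddAbove (δ : ℝ) : BddAbove (Set.range fun p : ℚ × ℚ =>
    if |(p.1 : ℝ) - (p.2 : ℝ)| ≤ δ then |W (clamp01 p.1) ω - W (clamp01 p.2) ω| else 0) := by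
  obtain ⟨C, hC0, hC⟩ := good_exists_bound hc
  refine ⟨2*C, ?_⟩
  rintro _ ⟨p, rfl⟩
  dsimp only
  split_ifs
  · calc |W (clamp01 p.1) ω - W (clamp01 p.2) ω|
        ≤ |W (clamp01 p.1) ω| + |W (clamp01 p.2) ω| := abs_sub _ _
      _ ≤ C + C := add_le_add (hC _ (clamp01_mem _)) (hC _ (clamp01_mem _))
      _ = 2*C := by ring
  · linarith

lemma MDe_nonneg {δ : ℝ} (hδ : 0 ≤ δ) : 0 ≤ MDe W δ ω := by
  have h0 : (0:ℝ) ≤ if |((0:ℚ) : ℝ) - ((0:ℚ) : ℝ)| ≤ δ then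
      |W (clamp01 ((0:ℚ):ℝ)) ω - W (clamp01 ((0:ℚ):ℝ)) ω| else 0 := by
    split_ifs
    · exact abs_nonneg _
    · exact le_refl 0
  exact h0.trans (le_ciSup (MDe_bddAbove hc δ) ((0:ℚ), (0:ℚ)))

lemma le_MDe {δ : ℝ} (hδ : 0 < δ) {s t : ℝ} (hs : s ∈ Set.Icc (0:ℝ) 1)
    (ht : t ∈ Set.Icc (0:ℝ) 1) (hst : |s - t| ≤ δ) :
    |W s ω - W t ω| ≤ MDe W (2*δ) ω := by
  obtain ⟨q, hq, hqs⟩ := exists_rat_seq s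
  obtain ⟨r, hr, hrt⟩ := exists_rat_seq t
  -- the sequence of candidate values
  set F : ℕ → ℝ := fun i => if |((q i : ℚ) : ℝ) - ((r i : ℚ) : ℝ)| ≤ 2*δ then
    |W (clamp01 (q i : ℝ)) ω - W (clamp01 (r i : ℝ)) ω| else 0 with hF
  have hFle : ∀ i, F i ≤ MDe W (2*δ) ω := fun i =>
    le_ciSup (MDe_bddAbove hc (2*δ)) ((q i), (r i))
  -- eventually the condition holds
  obtain ⟨N, hN⟩ := exists_nat_one_div_lt (K := ℝ) (half_pos hδ)
  have hev : ∀ᶠ i in atTop, F i = |W (clamp01 (q i : ℝ)) ω - W (clamp01 (r i : ℝ)) ω| := by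
    rw [eventually_atTop]
    refine ⟨N, fun i hi => ?_⟩
    have h1 : (1:ℝ)/(i+1) ≤ 1/(N+1) := by
      apply one_div_le_one_div_of_le (by positivity)
      have : (N:ℝ) ≤ i := Nat.cast_le.mpr hi
      linarith
    have hcond : |((q i : ℚ) : ℝ) - ((r i : ℚ) : ℝ)| ≤ 2*δ := by
      have h2 := hq i
      have h3 := hr i
      calc |((q i : ℚ) : ℝ) - ((r i : ℚ) : ℝ)|
          = |((q i : ℝ) - s) + (s - t) + (t - (r i : ℝ))| := by ring_nf
        _ ≤ |(q i : ℝ) - s| + |s - t| + |t - (r i : ℝ)| := by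
            exact (abs_add_le _ _).trans (add_le_add_left (abs_add_le _ _) _)
        _ = |s - (q i : ℝ)| + |s - t| + |t - (r i : ℝ)| := by rw [abs_sub_comm]
        _ ≤ 1/(i+1) + δ + 1/(i+1) := by
            exact add_le_add (add_le_add h2.le hst) h3.le
        _ ≤ 1/(N+1) + δ + 1/(N+1) := by linarith
        _ ≤ δ/2 + δ + δ/2 := by linarith
        _ = 2*δ := by ring
    rw [hF]
    simp only [hcond, if_true]
  -- the limit
  have hcls : Tendsto (fun i => clamp01 (q i : ℝ)) atTop (nhds s) := by
    have := (clamp01_continuous.tendsto s).comp hqs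
    rwa [clamp01_of_mem hs] at this
  have hclt : Tendsto (fun i => clamp01 (r i : ℝ)) atTop (nhds t) := by
    have := (clamp01_continuous.tendsto t).comp hrt
    rwa [clamp01_of_mem ht] at this
  have hWs : Tendsto (fun i => W (clamp01 (q i : ℝ)) ω) atTop (nhds (W s ω)) :=
    (hc.tendsto s).comp hcls
  have hWt : Tendsto (fun i => W (clamp01 (r i : ℝ)) ω) atTop (nhds (W t ω)) :=
    (hc.tendsto t).comp hclt
  have hlim : Tendsto F atTop (nhds |W s ω - W t ω|) := by
    apply Tendsto.congr' (hev.mono fun i hi => hi.symm)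
    exact (continuous_abs.tendsto _).comp (hWs.sub hWt)
  exact le_of_tendsto hlim (Eventually.of_forall hFle)

lemma MDe_le {δ ε : ℝ} (hε : 0 ≤ ε)
    (h : ∀ u ∈ Set.Icc (0:ℝ) 1, ∀ v ∈ Set.Icc (0:ℝ) 1, |u - v| ≤ δ → |W u ω - W v ω| ≤ ε) :
    MDe W δ ω ≤ ε := by
  apply ciSup_le
  intro p
  split_ifs with hcond
  · exact h _ (clamp01_mem _) _ (clamp01_mem _)
      ((clamp01_lipschitz _ _).trans hcond)
  · exact hε

end Envelope





/-- `Z` is a (pathwise) solution of the Ornstein–Uhlenbeck equation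
`dZ = -λ Z dt + η dW`, `Z₀ = 0`, on `[0, T]`, in integral form. -/
def SolvesOU {Ω : Type*} [MeasurableSpace Ω] (P : Measure Ω) (lam η : ℝ)
    (W Z : ℝ → Ω → ℝ) (T : ℝ) : Prop :=
  ∀ᵐ ω ∂P, ContinuousOn (fun t => Z t ω) (Set.Icc 0 T) ∧ Z 0 ω = 0 ∧
    ∀ t ∈ Set.Icc (0 : ℝ) T,
      Z t ω = -lam * (∫ s in (0 : ℝ)..t, Z s ω) + η * W t ω

/-- `W` is a standard Brownian motion under `P`. -/
def IsBrownianMotion {Ω : Type*} [MeasurableSpace Ω] (P : Measure Ω)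
    (W : ℝ → Ω → ℝ) : Prop :=
  (∀ t, Measurable (W t)) ∧
  (∀ᵐ ω ∂P, W 0 ω = 0 ∧ Continuous fun t => W t ω) ∧
  (∀ s t : ℝ, 0 ≤ s → s ≤ t →
    Measure.map (fun ω => W t ω - W s ω) P = gaussianReal 0 (Real.toNNReal (t - s))) ∧
  (∀ (n : ℕ) (u : ℕ → ℝ), Monotone u → 0 ≤ u 0 →
    iIndepFun
      (fun i : Fin n => fun ω => W (u (i + 1)) ω - W (u i) ω) P)

/-- `(1+x²)e^{-x} → 0` along `k+1`. -/
lemma poly_exp_tendsto :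
    Tendsto (fun k : ℕ => (1+((k:ℝ)+1)^2) * Real.exp (-((k:ℝ)+1))) atTop (nhds 0) := by
  have h1 : Tendsto (fun x : ℝ => (1+x^2) * Real.exp (-x)) atTop (nhds 0) := by
    have ha := Real.tendsto_exp_neg_atTop_nhds_zero
    have hb := Real.tendsto_pow_mul_exp_neg_atTop_nhds_zero 2
    have hab := ha.add hb
    rw [add_zero] at hab
    apply hab.congr
    intro x; ring
  have h2 : Tendsto (fun k : ℕ => ((k:ℝ)+1)) atTop atTop :=
    tendsto_atTop_add_const_right _ 1 tendsto_natCast_atTop_atTop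
  exact h1.comp h2

/-- per-`ω` convergence of the modulus envelope -/
lemma MDe_tendsto {Ω : Type*} [MeasurableSpace Ω] {W : ℝ → Ω → ℝ} {ω : Ω}
    (hc : Continuous fun t => W t ω) :
    Tendsto (fun k : ℕ => MDe W (2*((k:ℝ)+1)⁻¹) ω) atTop (nhds 0) := by
  rw [Metric.tendsto_atTop]
  intro ε hε
  have hu := (isCompact_Icc (a := (0:ℝ)) (b := 1)).uniformContinuousOn_of_continuous
    hc.continuousOn
  rw [Metric.uniformContinuousOn_iff] at hu
  obtain ⟨δ₀, hδ₀, hud⟩ := hu (ε/2) (half_pos hε)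
  obtain ⟨N, hN⟩ := exists_nat_one_div_lt (K := ℝ) (half_pos hδ₀)
  refine ⟨N, fun k hk => ?_⟩
  have hkpos : (0:ℝ) < (k:ℝ)+1 := by positivity
  have hδk : 2*((k:ℝ)+1)⁻¹ < δ₀ := by
    have h1 : ((k:ℝ)+1)⁻¹ ≤ 1/(N+1) := by
      rw [inv_eq_one_div]
      apply one_div_le_one_div_of_le (by positivity)
      have : (N:ℝ) ≤ k := Nat.cast_le.mpr hk
      linarith
    linarith
  have hMDle : MDe W (2*((k:ℝ)+1)⁻¹) ω ≤ ε/2 := by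
    apply MDe_le hc (by linarith)
    intro u hu' v hv' huv
    have : dist u v < δ₀ := by
      rw [Real.dist_eq]; linarith
    exact (le_of_lt (hud u hu' v hv' this))
  have hMD0 : 0 ≤ MDe W (2*((k:ℝ)+1)⁻¹) ω := MDe_nonneg hc (by positivity)
  rw [Real.dist_eq, sub_zero, abs_of_nonneg hMD0]
  linarith

theorem stmt_16 {Ω : Type*} [MeasurableSpace Ω] (P : Measure Ω) [IsProbabilityMeasure P]
    (W : ℝ → Ω → ℝ) (hW : IsBrownianMotion P W)
    (hexists : ∀ lam η : ℝ, 0 < lam → 0 < η → ∃ Z, SolvesOU P lam η W Z 1)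
    (η : ℕ → ℝ) (hηpos : ∀ n, 0 < η n) (hη : Tendsto η atTop atTop) :
    ∃ (lam : ℕ → ℝ) (X : ℕ → ℝ → Ω → ℝ),
      (∀ n, 0 < lam n ∧ SolvesOU P (lam n) (η n) W (X n) 1) ∧
      (∀ᵐ ω ∂P,
        Tendsto (fun n => ⨆ t : Set.Icc (0 : ℝ) 1, |X n t ω|) atTop (nhds 0)) ∧
      Tendsto (fun n => (η n) ^ 2) atTop atTop := by
  obtain ⟨hWm, hWae, -, -⟩ := hW
  -- the dominating bound
  set B : ℕ → ℕ → Ω → ℝ := fun n k ω =>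
    2 * η n * (MDe W (2*((k:ℝ)+1)⁻¹) ω +
      MWe W ω * ((1+((k:ℝ)+1)^2) * Real.exp (-((k:ℝ)+1)))) with hBdef
  have hBmeas : ∀ n k, Measurable (B n k) := by
    intro n k
    apply Measurable.const_mul
    exact (MDe_measurable W hWm _).add ((MWe_measurable W hWm).mul_const _)
  have hBae : ∀ n, ∀ᵐ ω ∂P, Tendsto (fun k => B n k ω) atTop (nhds (0:ℝ)) := by
    intro n
    filter_upwards [hWae] with ω hω
    have hc : Continuous fun t => W t ω := hω.2
    have h1 := (MDe_tendsto hc).add (poly_exp_tendsto.const_mul (MWe W ω))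
    rw [mul_zero, add_zero] at h1
    have h2 := h1.const_mul (2 * η n)
    rw [mul_zero] at h2
    exact h2
  have hTIM : ∀ n, TendstoInMeasure P (fun k => B n k) atTop (fun _ => (0:ℝ)) := fun n =>
    tendstoInMeasure_of_tendsto_ae (fun k => (hBmeas n k).aestronglyMeasurable) (hBae n)
  have hsel : ∀ n : ℕ, ∃ k : ℕ,
      P {ω | (2⁻¹:ℝ)^n ≤ dist (B n k ω) 0} < (2⁻¹ : ENNReal)^n := by
    intro n
    have hpos : (0:ℝ) < (2⁻¹:ℝ)^n := by positivity
    have hpos2 : (0:ENNReal) < (2⁻¹ : ENNReal)^n :=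
      ENNReal.pow_pos (by norm_num) n
    have h := (hTIM n (ENNReal.ofReal ((2⁻¹:ℝ)^n)) (ENNReal.ofReal_pos.mpr hpos)).eventually
      (gt_mem_nhds hpos2)
    obtain ⟨k, hk⟩ := h.exists
    refine ⟨k, ?_⟩
    have hset : {ω | (2⁻¹:ℝ)^n ≤ dist (B n k ω) 0} =
        {ω | ENNReal.ofReal ((2⁻¹:ℝ)^n) ≤ edist (B n k ω) 0} := by
      ext ω
      simp only [Set.mem_setOf_eq, edist_dist, ENNReal.ofReal_le_ofReal_iff dist_nonneg]
    rw [hset]; exact hk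
  choose K hK using hsel
  set lam : ℕ → ℝ := fun n => ((K n : ℝ)+1)^2 with hlamdef
  have hlampos : ∀ n, 0 < lam n := fun n => by positivity
  have hZex : ∀ n, ∃ Z, SolvesOU P (lam n) (η n) W Z 1 := fun n =>
    hexists _ _ (hlampos n) (hηpos n)
  choose X hX using hZex
  refine ⟨lam, X, fun n => ⟨hlampos n, hX n⟩, ?_, ?_⟩
  · -- a.s. sup convergence
    have hsum : (∑' n, P {ω | (2⁻¹:ℝ)^n ≤ dist (B n (K n) ω) 0}) ≠ ⊤ := by
      apply ne_top_of_le_ne_top _ (ENNReal.tsum_le_tsum fun n => (hK n).le)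
      rw [ENNReal.tsum_geometric, ENNReal.one_sub_inv_two]
      simp
    have hfreq : P {ω | ∃ᶠ n in atTop, (2⁻¹:ℝ)^n ≤ dist (B n (K n) ω) 0} = 0 :=
      measure_setOf_frequently_eq_zero hsum
    have hBC : ∀ᵐ ω ∂P, ∀ᶠ n in atTop, dist (B n (K n) ω) 0 < (2⁻¹:ℝ)^n := by
      rw [ae_iff]
      have hset : {ω | ¬ ∀ᶠ n in atTop, dist (B n (K n) ω) 0 < (2⁻¹:ℝ)^n} =
          {ω | ∃ᶠ n in atTop, (2⁻¹:ℝ)^n ≤ dist (B n (K n) ω) 0} := by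
        ext ω
        simp only [Set.mem_setOf_eq, Filter.not_eventually, not_lt]
      rw [hset]
      exact hfreq
    filter_upwards [hBC, hWae, ae_all_iff.mpr hX] with ω hbc hωW hsol
    obtain ⟨hW0, hWc⟩ := hωW
    -- uniform bound on the paths
    have hb : ∀ n, ∀ t ∈ Set.Icc (0:ℝ) 1, |X n t ω| ≤ B n (K n) ω := by
      intro n
      obtain ⟨hXc, hX0, hXeq⟩ := hsol n
      have hδpos : (0:ℝ) < ((K n : ℝ)+1)⁻¹ := by positivity
      have happ := ou_bound' (lam n) (η n) ((K n : ℝ)+1)⁻¹ (MWe W ω)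
        (MDe W (2*((K n : ℝ)+1)⁻¹) ω) (fun t => W t ω) (fun t => X n t ω)
        (hlampos n) (hηpos n) hδpos hWc hW0 hXc
        (fun t ht => le_MWe hWc ht)
        (fun s hs t ht hst => le_MDe hWc hδpos hs ht hst)
        hXeq
      intro t ht
      calc |X n t ω| ≤ 2*(η n)*(MDe W (2*((K n : ℝ)+1)⁻¹) ω +
            MWe W ω*(1+lam n)*Real.exp (-(lam n * ((K n : ℝ)+1)⁻¹))) := happ t ht
        _ = B n (K n) ω := by
            have hne : ((K n : ℝ)+1) ≠ 0 := by positivity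
            have heq1 : ((K n : ℝ)+1)^2 * ((K n : ℝ)+1)⁻¹ = (K n : ℝ)+1 := by
              rw [sq]
              exact mul_inv_cancel_right₀ hne _
            simp only [hBdef, hlamdef]
            rw [heq1]
            ring
    haveI : Nonempty (Set.Icc (0:ℝ) 1) := ⟨⟨0, le_refl 0, zero_le_one⟩⟩
    have hbdd : ∀ n, BddAbove (Set.range fun t : Set.Icc (0:ℝ) 1 => |X n (t:ℝ) ω|) :=
      fun n => ⟨B n (K n) ω, by rintro _ ⟨t, rfl⟩; exact hb n t t.2⟩
    have hup : ∀ n, (⨆ t : Set.Icc (0:ℝ) 1, |X n (t:ℝ) ω|) ≤ B n (K n) ω :=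
      fun n => ciSup_le fun t => hb n t t.2
    have hlow : ∀ n, 0 ≤ ⨆ t : Set.Icc (0:ℝ) 1, |X n (t:ℝ) ω| :=
      fun n => (abs_nonneg (X n 0 ω)).trans (le_ciSup (hbdd n) ⟨0, le_refl 0, zero_le_one⟩)
    have hBto : Tendsto (fun n => B n (K n) ω) atTop (nhds 0) := by
      have hge : ∀ n, 0 ≤ B n (K n) ω := fun n =>
        mul_nonneg (by linarith [hηpos n]) (add_nonneg
          (MDe_nonneg hWc (by positivity)) (mul_nonneg (MWe_nonneg hWc) (by positivity)))
      have hle : ∀ᶠ n in atTop, B n (K n) ω ≤ (2⁻¹:ℝ)^n := by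
        apply hbc.mono
        intro n hn
        rw [Real.dist_eq, sub_zero] at hn
        exact (le_abs_self _).trans hn.le
      exact squeeze_zero' (Eventually.of_forall hge) hle
        (tendsto_pow_atTop_nhds_zero_of_lt_one (by norm_num) (by norm_num))
    exact squeeze_zero hlow hup hBto
  · -- η² → ∞
    have := hη.atTop_mul_atTop₀ hη
    apply this.congr
    intro n
    rw [pow_two]
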